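/- Let s > 2 and 0 ≤ γ < min(s − 2, 1). Then there exists a constant C = C(s, γ) such that for every a ≥ 0, ∫₀^∞ ⟨a⟩^γ · r · ⟨r − a⟩^{−(s−2)} · ⟨r⟩^{−2} dr ≤ C. -/
import Mathlib

open MeasureTheory

private lemma min_trick {f g α β : ℝ} (hf : 1 ≤ f) (hg : 1 ≤ g) (hα : 0 ≤ α) (hβ : 0 ≤ β) :
    f ^ (-α) * g ^ (-β) ≤ f ^ (-(α + β)) + g ^ (-(α + β)) := by
  rcases le_total f g with h | h
  · have h1 : g ^ (-β) ≤ f ^ (-β) :=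
      Real.rpow_le_rpow_of_nonpos (by linarith) h (by linarith)
    calc f ^ (-α) * g ^ (-β) ≤ f ^ (-α) * f ^ (-β) := by
          exact mul_le_mul_of_nonneg_left h1 (Real.rpow_nonneg (by linarith) _)
      _ = f ^ (-(α + β)) := by rw [← Real.rpow_add (by linarith)]; ring_nf
      _ ≤ _ := le_add_of_nonneg_right (Real.rpow_nonneg (by linarith) _)
  · have h1 : f ^ (-α) ≤ g ^ (-α) :=
      Real.rpow_le_rpow_of_nonpos (by linarith) h (by linarith)
    calc f ^ (-α) * g ^ (-β) ≤ g ^ (-α) * g ^ (-β) := by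
          exact mul_le_mul_of_nonneg_right h1 (Real.rpow_nonneg (by linarith) _)
      _ = g ^ (-(α + β)) := by rw [← Real.rpow_add (by linarith)]; ring_nf
      _ ≤ _ := le_add_of_nonneg_left (Real.rpow_nonneg (by linarith) _)

private lemma le_bracket (r : ℝ) : r ≤ (1 + r ^ 2) ^ ((1:ℝ)/2) := by
  have h1 : (0:ℝ) ≤ 1 + r ^ 2 := by positivity
  rw [← Real.sqrt_eq_rpow]
  nlinarith [Real.sq_sqrt h1, Real.sqrt_nonneg (1 + r ^ 2)]

private lemma four_rpow (γ : ℝ) : (4:ℝ) ^ (γ/2) = 2 ^ γ := by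
  rw [show (4:ℝ) = (2:ℝ) ^ (2:ℝ) by norm_num, ← Real.rpow_mul (by norm_num)]
  congr 1; ring

private lemma pointwise_bound (s γ : ℝ) (hs : 2 < s) (hγ₀ : 0 ≤ γ) (hγ1 : γ < 1)
    (hγs : γ < s - 2) (a : ℝ) (ha : 0 ≤ a) (r : ℝ) :
    (1 + a ^ 2) ^ (γ / 2) * r * (1 + (r - a) ^ 2) ^ (-(s - 2) / 2) * (1 + r ^ 2)⁻¹ ≤
    (2 ^ γ + 2 ^ (s - 2)) * ((1 + (r - a) ^ 2) ^ (-(s - 1 - γ) / 2)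
      + (1 + r ^ 2) ^ (-(s - 1 - γ) / 2) + (1 + r ^ 2) ^ (-(1 + (s - 2 - γ)) / 2)) := by
  set P : ℝ := 1 + (r - a) ^ 2 with hP
  set Q : ℝ := 1 + r ^ 2 with hQ
  set A : ℝ := 1 + a ^ 2 with hA
  have hP1 : (1:ℝ) ≤ P := le_add_of_nonneg_right (sq_nonneg _)
  have hQ1 : (1:ℝ) ≤ Q := le_add_of_nonneg_right (sq_nonneg _)
  have hA1 : (1:ℝ) ≤ A := le_add_of_nonneg_right (sq_nonneg _)
  have hK : (0:ℝ) < 2 ^ γ + 2 ^ (s - 2) := by positivity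
  have hRHS : (0:ℝ) ≤ P ^ (-(s - 1 - γ) / 2) + Q ^ (-(s - 1 - γ) / 2)
      + Q ^ (-(1 + (s - 2 - γ)) / 2) := by positivity
  rcases le_or_gt r 0 with hr | hr
  · calc A ^ (γ / 2) * r * P ^ (-(s - 2) / 2) * Q⁻¹
        = (A ^ (γ / 2) * P ^ (-(s - 2) / 2) * Q⁻¹) * r := by ring
      _ ≤ 0 := mul_nonpos_iff.2 (Or.inl ⟨by positivity, hr⟩)
      _ ≤ _ := by positivity
  rcases le_total a (2 * r) with h2r | h2r
  · -- region r ≥ a/2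
    have hAQ : A ≤ 4 * Q := by rw [hA, hQ]; nlinarith
    have h1 : A ^ (γ / 2) ≤ 2 ^ γ * Q ^ (γ / 2) := by
      calc A ^ (γ / 2) ≤ (4 * Q) ^ (γ / 2) :=
            Real.rpow_le_rpow (by positivity) hAQ (by positivity)
        _ = 2 ^ γ * Q ^ (γ / 2) := by
            rw [Real.mul_rpow (by norm_num) (by positivity), four_rpow]
    have key : A ^ (γ / 2) * r * P ^ (-(s - 2) / 2) * Q⁻¹ ≤
        2 ^ γ * (P ^ (-((s-2)/2)) * Q ^ (-((1-γ)/2))) := by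
      have h2 : r ≤ Q ^ ((1:ℝ)/2) := le_bracket r
      have hcomb : Q ^ (γ / 2) * Q ^ ((1:ℝ)/2) * Q⁻¹ = Q ^ (-((1-γ)/2)) := by
        rw [← Real.rpow_add (by linarith), ← Real.rpow_neg_one Q,
          ← Real.rpow_add (by linarith)]
        congr 1; ring
      calc A ^ (γ / 2) * r * P ^ (-(s - 2) / 2) * Q⁻¹
          ≤ (2 ^ γ * Q ^ (γ / 2)) * (Q ^ ((1:ℝ)/2)) * P ^ (-(s - 2) / 2) * Q⁻¹ := by
            have hq : (0:ℝ) ≤ Q⁻¹ := by positivity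
            have hp : (0:ℝ) ≤ P ^ (-(s - 2) / 2) := by positivity
            apply mul_le_mul_of_nonneg_right _ hq
            apply mul_le_mul_of_nonneg_right _ hp
            exact mul_le_mul h1 h2 hr.le (by positivity)
        _ = 2 ^ γ * (P ^ (-((s-2)/2)) * (Q ^ (γ / 2) * Q ^ ((1:ℝ)/2) * Q⁻¹)) := by
            rw [neg_div]; ring
        _ = 2 ^ γ * (P ^ (-((s-2)/2)) * Q ^ (-((1-γ)/2))) := by rw [hcomb]
    have hmt : P ^ (-((s-2)/2)) * Q ^ (-((1-γ)/2)) ≤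
        P ^ (-(s - 1 - γ) / 2) + Q ^ (-(s - 1 - γ) / 2) := by
      have := min_trick hP1 hQ1 (by linarith : (0:ℝ) ≤ (s-2)/2)
        (by linarith : (0:ℝ) ≤ (1-γ)/2)
      have he : (s-2)/2 + (1-γ)/2 = (s - 1 - γ)/2 := by ring
      rw [he] at this
      calc P ^ (-((s-2)/2)) * Q ^ (-((1-γ)/2))
          ≤ P ^ (-((s - 1 - γ)/2)) + Q ^ (-((s - 1 - γ)/2)) := this
        _ = P ^ (-(s - 1 - γ) / 2) + Q ^ (-(s - 1 - γ) / 2) := by rw [neg_div]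
    calc A ^ (γ / 2) * r * P ^ (-(s - 2) / 2) * Q⁻¹
        ≤ 2 ^ γ * (P ^ (-((s-2)/2)) * Q ^ (-((1-γ)/2))) := key
      _ ≤ 2 ^ γ * (P ^ (-(s - 1 - γ) / 2) + Q ^ (-(s - 1 - γ) / 2)) :=
          mul_le_mul_of_nonneg_left hmt (by positivity)
      _ ≤ (2 ^ γ + 2 ^ (s - 2)) * (P ^ (-(s - 1 - γ) / 2) + Q ^ (-(s - 1 - γ) / 2)
            + Q ^ (-(1 + (s - 2 - γ)) / 2)) := by
          have h2 : (0:ℝ) ≤ Q ^ (-(1 + (s - 2 - γ)) / 2) := by positivity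
          have h3 : (0:ℝ) ≤ P ^ (-(s - 1 - γ) / 2) + Q ^ (-(s - 1 - γ) / 2) := by positivity
          have hKγ : (2:ℝ) ^ γ ≤ 2 ^ γ + 2 ^ (s-2) := le_add_of_nonneg_right (by positivity)
          calc (2:ℝ) ^ γ * (P ^ (-(s - 1 - γ) / 2) + Q ^ (-(s - 1 - γ) / 2))
              ≤ (2 ^ γ + 2 ^ (s-2)) * (P ^ (-(s - 1 - γ) / 2) + Q ^ (-(s - 1 - γ) / 2)) :=
                mul_le_mul_of_nonneg_right hKγ h3
            _ ≤ _ := mul_le_mul_of_nonneg_left (le_add_of_nonneg_right h2) hK.le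
  · -- region r ≤ a/2
    have hra : r ≤ a := by linarith
    have hAP : A ≤ 4 * P := by
      rw [hA, hP]
      nlinarith [mul_nonneg (by linarith : (0:ℝ) ≤ a - 2*r) (by linarith : (0:ℝ) ≤ 3*a - 2*r)]
    have hQA : Q ≤ A := by rw [hQ, hA]; nlinarith
    -- P^(-(s-2)/2) ≤ 2^(s-2) * A^(-(s-2)/2)
    have h1 : P ^ (-(s - 2) / 2) ≤ 2 ^ (s-2) * A ^ (-((s - 2)/2)) := by
      have hA4 : A / 4 ≤ P := by linarith
      have := Real.rpow_le_rpow_of_nonpos (by positivity : (0:ℝ) < A / 4) hA4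
        (by linarith : -((s-2)/2) ≤ 0)
      calc P ^ (-(s - 2) / 2) = P ^ (-((s - 2)/2)) := by rw [neg_div]
        _ ≤ (A / 4) ^ (-((s - 2)/2)) := this
        _ = 2 ^ (s-2) * A ^ (-((s - 2)/2)) := by
            rw [Real.div_rpow (by linarith) (by norm_num),
              Real.rpow_neg (by norm_num : (0:ℝ) ≤ 4), four_rpow, div_eq_mul_inv, inv_inv, mul_comm]
    have h2 : A ^ (γ / 2) * A ^ (-((s - 2)/2)) = A ^ (-((s - 2 - γ)/2)) := by
      rw [← Real.rpow_add (by linarith)]; congr 1; ring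
    have h3 : A ^ (-((s - 2 - γ)/2)) ≤ Q ^ (-((s - 2 - γ)/2)) :=
      Real.rpow_le_rpow_of_nonpos (by linarith) hQA (by linarith)
    have h4 : r * Q⁻¹ ≤ Q ^ (-(1:ℝ)/2) := by
      have := mul_le_mul_of_nonneg_right (le_bracket r) (by positivity : (0:ℝ) ≤ Q⁻¹)
      calc r * Q⁻¹ ≤ Q ^ ((1:ℝ)/2) * Q⁻¹ := this
        _ = Q ^ (-(1:ℝ)/2) := by
            rw [← Real.rpow_neg_one Q, ← Real.rpow_add (by linarith)]
            congr 1; ring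
    have h5 : Q ^ (-((s - 2 - γ)/2)) * Q ^ (-(1:ℝ)/2) = Q ^ (-(1 + (s - 2 - γ)) / 2) := by
      rw [← Real.rpow_add (by linarith)]; congr 1; ring
    calc A ^ (γ / 2) * r * P ^ (-(s - 2) / 2) * Q⁻¹
        = A ^ (γ / 2) * P ^ (-(s - 2) / 2) * (r * Q⁻¹) := by ring
      _ ≤ A ^ (γ / 2) * (2 ^ (s-2) * A ^ (-((s - 2)/2))) * (Q ^ (-(1:ℝ)/2)) := by
          apply mul_le_mul (mul_le_mul_of_nonneg_left h1 (by positivity)) h4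
            (by positivity) (by positivity)
      _ = 2 ^ (s-2) * ((A ^ (γ / 2) * A ^ (-((s - 2)/2))) * Q ^ (-(1:ℝ)/2)) := by ring
      _ ≤ 2 ^ (s-2) * (Q ^ (-((s - 2 - γ)/2)) * Q ^ (-(1:ℝ)/2)) := by
          apply mul_le_mul_of_nonneg_left _ (by positivity)
          rw [h2]
          exact mul_le_mul_of_nonneg_right h3 (by positivity)
      _ = 2 ^ (s-2) * Q ^ (-(1 + (s - 2 - γ)) / 2) := by rw [h5]
      _ ≤ (2 ^ γ + 2 ^ (s - 2)) * (P ^ (-(s - 1 - γ) / 2) + Q ^ (-(s - 1 - γ) / 2)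
            + Q ^ (-(1 + (s - 2 - γ)) / 2)) := by
          have hp12 : (0:ℝ) ≤ P ^ (-(s - 1 - γ) / 2) + Q ^ (-(s - 1 - γ) / 2) := by positivity
          have hp3 : (0:ℝ) ≤ Q ^ (-(1 + (s - 2 - γ)) / 2) := by positivity
          have hKs : (2:ℝ) ^ (s-2) ≤ 2 ^ γ + 2 ^ (s-2) := le_add_of_nonneg_left (by positivity)
          calc (2:ℝ) ^ (s-2) * Q ^ (-(1 + (s - 2 - γ)) / 2)
              ≤ (2 ^ γ + 2 ^ (s-2)) * Q ^ (-(1 + (s - 2 - γ)) / 2) :=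
                mul_le_mul_of_nonneg_right hKs hp3
            _ ≤ _ := mul_le_mul_of_nonneg_left (le_add_of_nonneg_left hp12) hK.le

private lemma integrable_bracket {t : ℝ} (ht : 1 < t) :
    Integrable (fun x : ℝ => (1 + x ^ 2) ^ (-t / 2)) := by
  have h := integrable_rpow_neg_one_add_norm_sq (E := ℝ) (μ := volume) (r := t)
    (by simpa using ht)
  simpa [Real.norm_eq_abs, sq_abs] using h

/-- Let `s > 2` and `0 ≤ γ < min(s-2, 1)`. Then there exists a constant
`C = C(s,γ)` such that for every `a ≥ 0`,
`∫₀^∞ ⟨a⟩^γ · r · ⟨r-a⟩^{-(s-2)} · ⟨r⟩^{-2} dr ≤ C`, where `⟨x⟩ = (1 + x²)^{1/2}`. -/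
theorem stmt_1 (s γ : ℝ) (hs : 2 < s) (hγ₀ : 0 ≤ γ) (hγ : γ < min (s - 2) 1) :
    ∃ C : ℝ, ∀ a : ℝ, 0 ≤ a →
      (∫⁻ r in Set.Ioi (0 : ℝ),
          ENNReal.ofReal ((1 + a ^ 2) ^ (γ / 2) * r *
            (1 + (r - a) ^ 2) ^ (-(s - 2) / 2) * (1 + r ^ 2)⁻¹))
        ≤ ENNReal.ofReal C := by
  have hγs : γ < s - 2 := lt_of_lt_of_le hγ (min_le_left _ _)
  have hγ1 : γ < 1 := lt_of_lt_of_le hγ (min_le_right _ _)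
  set σ : ℝ := s - 1 - γ with hσ
  set ε : ℝ := s - 2 - γ with hε
  have hσ1 : 1 < σ := by rw [hσ]; linarith
  have hε1 : 1 < 1 + ε := by rw [hε]; linarith
  set K : ℝ := 2 ^ γ + 2 ^ (s - 2) with hK
  have hK0 : 0 ≤ K := by positivity
  set g₁ : ℝ → ℝ := fun x => (1 + x ^ 2) ^ (-σ / 2) with hg₁
  set g₂ : ℝ → ℝ := fun x => (1 + x ^ 2) ^ (-(1 + ε) / 2) with hg₂
  have hig₁ : Integrable g₁ := integrable_bracket hσ1
  have hig₂ : Integrable g₂ := integrable_bracket hε1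
  refine ⟨K * (2 * (∫ x, g₁ x) + ∫ x, g₂ x), fun a ha => ?_⟩
  set G : ℝ → ℝ := fun r => K * (g₁ (r - a) + g₁ r + g₂ r) with hG
  have hiG : Integrable G := (((hig₁.comp_sub_right a).add hig₁).add hig₂).const_mul K
  have hGnn : 0 ≤ᵐ[volume] G := Filter.Eventually.of_forall fun r => by
    have : (0:ℝ) ≤ g₁ (r - a) := Real.rpow_nonneg (by positivity) _
    have : (0:ℝ) ≤ g₁ r := Real.rpow_nonneg (by positivity) _
    have : (0:ℝ) ≤ g₂ r := Real.rpow_nonneg (by positivity) _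
    have h1 : (0:ℝ) ≤ g₁ (r - a) := Real.rpow_nonneg (by positivity) _
    positivity
  calc (∫⁻ r in Set.Ioi (0 : ℝ),
          ENNReal.ofReal ((1 + a ^ 2) ^ (γ / 2) * r *
            (1 + (r - a) ^ 2) ^ (-(s - 2) / 2) * (1 + r ^ 2)⁻¹))
      ≤ ∫⁻ r, ENNReal.ofReal ((1 + a ^ 2) ^ (γ / 2) * r *
            (1 + (r - a) ^ 2) ^ (-(s - 2) / 2) * (1 + r ^ 2)⁻¹) :=
        setLIntegral_le_lintegral _ _
    _ ≤ ∫⁻ r, ENNReal.ofReal (G r) := by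
        apply lintegral_mono fun r => ENNReal.ofReal_le_ofReal ?_
        have h := pointwise_bound s γ hs hγ₀ hγ1 hγs a ha r
        simpa [hG, hg₁, hg₂, hK, hσ, hε, neg_div] using h
    _ = ENNReal.ofReal (∫ r, G r) :=
        (ofReal_integral_eq_lintegral_ofReal hiG hGnn).symm
    _ = ENNReal.ofReal (K * (2 * (∫ x, g₁ x) + ∫ x, g₂ x)) := by
        congr 1
        simp only [hG]
        have i1 : Integrable (fun x : ℝ => g₁ (x - a)) := hig₁.comp_sub_right a
        have e2 : ∫ x, (g₁ (x - a) + g₁ x + g₂ x) =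
            (∫ x, (g₁ (x - a) + g₁ x)) + ∫ x, g₂ x := integral_add (i1.add hig₁) hig₂
        have e3 : ∫ x, (g₁ (x - a) + g₁ x) = (∫ x, g₁ (x - a)) + ∫ x, g₁ x :=
          integral_add i1 hig₁
        rw [integral_const_mul, e2, e3, integral_sub_right_eq_self g₁ a]
        ring
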